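/- Let d ≥ 1 be an integer, q ∈ (0,1], p ∈ (1,2], and let f : ℝ^d → ℝ be differentiable with prog_0(∇f(x)) ≤ prog_0(x) + 1 for all x ∈ ℝ^d. Let ξ be a Bernoulli random variable with ℙ(ξ = 1) = q, and define the gated stochastic gradient coordinate-wise by (∇̂F(x;ξ))_j = (∇f(x))_j · (1 + 𝟙[j > prog_0(x)](ξ/q − 1)) for j = 1,…,d. Then for every x ∈ ℝ^d the vector ∇̂F(x;ξ) − ∇f(x) has at most one nonzero coordinate, 𝔼[∇̂F(x;ξ)] = ∇f(x), and 𝔼‖∇̂F(x;ξ) − ∇f(x)‖^p ≤ 2‖∇f(x)‖_∞^p / q^{p−1}, where ‖·‖ is the Euclidean norm and ‖·‖_∞ the supremum norm. -/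

import Mathlib

open MeasureTheory

/-- The `i`-th coordinate (1-based, `1 ≤ i ≤ d`) of a vector in `ℝ^d`;
zero when out of range. -/
noncomputable def coord (d : ℕ) (y : EuclideanSpace ℝ (Fin d)) (i : ℕ) : ℝ :=
  if h : i - 1 < d then y ⟨i - 1, h⟩ else 0

open Classical in
/-- The progress index `prog_a(x) = max({i ∈ {1,…,d} : |x_i| > a} ∪ {0})`. -/
noncomputable def prog (d : ℕ) (a : ℝ) (y : EuclideanSpace ℝ (Fin d)) : ℕ :=
  ((Finset.Icc 1 d).filter fun i => a < |coord d y i|).sup id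

lemma prog_ge (d : ℕ) (g : EuclideanSpace ℝ (Fin d)) (j : Fin d) (hgj : g j ≠ 0) :
    (j : ℕ) + 1 ≤ prog d 0 g := by
  classical
  have hmem : (j : ℕ) + 1 ∈ (Finset.Icc 1 d).filter fun i => (0:ℝ) < |coord d g i| := by
    refine Finset.mem_filter.mpr ⟨Finset.mem_Icc.mpr ⟨Nat.le_add_left 1 _, j.2⟩, ?_⟩
    have : coord d g ((j : ℕ) + 1) = g j := by
      simp [coord, Nat.add_sub_cancel, j.2]
    rw [this]
    exact abs_pos.mpr hgj
  simpa [prog] using Finset.le_sup (f := id) hmem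

/-- Properties of the Bernoulli-gated stochastic gradient oracle
`(∇̂F(x;ξ))_j = (∇f(x))_j (1 + 𝟙[j > prog_0(x)](ξ/q − 1))`:
the noise has at most one nonzero coordinate, the oracle is unbiased, and
`𝔼‖∇̂F(x;ξ) − ∇f(x)‖^p ≤ 2‖∇f(x)‖_∞^p / q^{p−1}`. -/
theorem gated_oracle_properties {Ω : Type*} {mΩ : MeasurableSpace Ω}
    (μ : Measure Ω) [IsProbabilityMeasure μ]
    (d : ℕ) (hd : 1 ≤ d)
    (q p : ℝ) (hq0 : 0 < q) (hq1 : q ≤ 1) (hp1 : 1 < p) (hp2 : p ≤ 2)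
    (f : EuclideanSpace ℝ (Fin d) → ℝ) (hdiff : Differentiable ℝ f)
    (hprog : ∀ x, prog d 0 (gradient f x) ≤ prog d 0 x + 1)
    (ξ : Ω → ℝ) (hmeas : Measurable ξ)
    (hval : ∀ ω, ξ ω = 0 ∨ ξ ω = 1)
    (hq : μ {ω | ξ ω = 1} = ENNReal.ofReal q)
    (ghat : EuclideanSpace ℝ (Fin d) → Ω → EuclideanSpace ℝ (Fin d))
    (hghat : ∀ x ω (j : Fin d), ghat x ω j =
      gradient f x j *
        (1 + (if prog d 0 x < (j : ℕ) + 1 then ξ ω / q - 1 else 0))) :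
    ∀ x : EuclideanSpace ℝ (Fin d),
      (∀ ω, ∀ i i' : Fin d, (ghat x ω - gradient f x) i ≠ 0 →
          (ghat x ω - gradient f x) i' ≠ 0 → i = i') ∧
      (∫ ω, ghat x ω ∂μ) = gradient f x ∧
      ∫ ω, ‖ghat x ω - gradient f x‖ ^ p ∂μ ≤
        2 * ‖(WithLp.equiv 2 (Fin d → ℝ)) (gradient f x)‖ ^ p / q ^ (p - 1) := by
  intro x
  set g := gradient f x with hgdef
  set P := prog d 0 x with hPdef
  -- Lemma A : any coordinate surviving the gate with nonzero gradient equals P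
  have hA : ∀ j : Fin d, g j ≠ 0 → P < (j : ℕ) + 1 → (j : ℕ) = P := by
    intro j hgj hPj
    have h1 : (j : ℕ) + 1 ≤ prog d 0 g := prog_ge d g j hgj
    have h2 := hprog x
    rw [← hgdef, ← hPdef] at h2
    omega
  -- the noise, coordinatewise
  have hnoise : ∀ ω (j : Fin d), (ghat x ω - g) j
      = g j * (if P < (j : ℕ) + 1 then ξ ω / q - 1 else 0) := by
    intro ω j
    have := hghat x ω j
    simp only [PiLp.sub_apply, this, ← hgdef, ← hPdef]
    ring
  -- the direction vector
  set v : EuclideanSpace ℝ (Fin d) :=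
    WithLp.toLp 2 (fun j : Fin d => if P < (j : ℕ) + 1 then g j else 0 : Fin d → ℝ) with hvdef
  have hv_apply : ∀ j : Fin d, v j = if P < (j : ℕ) + 1 then g j else 0 := fun j => rfl
  have hrepr : ∀ ω, ghat x ω - g = (ξ ω / q - 1) • v := by
    intro ω
    ext j
    rw [hnoise ω j]
    show _ = (ξ ω / q - 1) * v j
    rw [hv_apply]
    split_ifs <;> ring
  -- norm bound on v
  set M := ‖(WithLp.equiv 2 (Fin d → ℝ)) g‖ with hMdef
  have hM0 : 0 ≤ M := norm_nonneg _
  have hMj : ∀ j : Fin d, |g j| ≤ M := by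
    intro j
    simpa [Real.norm_eq_abs, hMdef] using norm_le_pi_norm ((WithLp.equiv 2 (Fin d → ℝ)) g) j
  have hvj : ∀ j : Fin d, |v j| ≤ M := by
    intro j
    rw [hv_apply]
    split_ifs
    · exact hMj j
    · simpa using hM0
  have hv_unique : ∀ j : Fin d, v j ≠ 0 → (j : ℕ) = P := by
    intro j hj
    rw [hv_apply] at hj
    by_cases hgj : g j = 0
    · simp [hgj] at hj
    · by_cases hPj : P < (j : ℕ) + 1
      · exact hA j hgj hPj
      · simp [hPj] at hj
  have hnormv : ‖v‖ ≤ M := by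
    rw [EuclideanSpace.norm_eq]
    have hsum : (∑ i : Fin d, ‖v i‖ ^ 2) ≤ M ^ 2 := by
      by_cases hPd : P < d
      · have := Finset.sum_eq_single (s := Finset.univ) (⟨P, hPd⟩ : Fin d)
          (f := fun i => ‖v i‖ ^ 2) ?_ ?_
        · rw [this]
          have : ‖v ⟨P, hPd⟩‖ ≤ M := by simpa [Real.norm_eq_abs] using hvj ⟨P, hPd⟩
          exact pow_le_pow_left₀ (norm_nonneg _) this 2
        · intro b _ hb
          have : v b = 0 := by
            by_contra h
            exact hb (Fin.ext (hv_unique b h))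
          simp [this]
        · intro h; exact absurd (Finset.mem_univ _) h
      · have : ∀ i : Fin d, v i = 0 := by
          intro i
          by_contra h
          have := hv_unique i h
          omega
        simp [this]
        positivity
    calc Real.sqrt (∑ i : Fin d, ‖v i‖ ^ 2) ≤ Real.sqrt (M ^ 2) := Real.sqrt_le_sqrt hsum
      _ = M := Real.sqrt_sq hM0
  -- integrability of ξ
  have hintξ : Integrable ξ μ := by
    refine (integrable_const (1:ℝ)).mono' hmeas.aestronglyMeasurable ?_
    refine ae_of_all _ fun ω => ?_
    rcases hval ω with h | h <;> simp [h]
  have hs : MeasurableSet {ω | ξ ω = 1} := hmeas (measurableSet_singleton 1)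
  have hEξ : ∫ ω, ξ ω ∂μ = q := by
    have hind : ∀ ω, ξ ω = Set.indicator {ω | ξ ω = 1} (fun _ => (1:ℝ)) ω := by
      intro ω
      rcases hval ω with h | h
      · rw [Set.indicator_of_notMem]
        · exact h
        · simp [h]
      · rw [Set.indicator_of_mem]
        · exact h
        · exact h
    calc ∫ ω, ξ ω ∂μ = ∫ ω, Set.indicator {ω | ξ ω = 1} (fun _ => (1:ℝ)) ω ∂μ := by
          exact integral_congr_ae (ae_of_all _ hind)
      _ = (μ {ω | ξ ω = 1}).toReal • (1:ℝ) := integral_indicator_const _ hs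
      _ = q := by rw [hq, ENNReal.toReal_ofReal hq0.le]; simp
  have hintc : Integrable (fun ω => ξ ω / q - 1) μ := (hintξ.div_const q).sub (integrable_const 1)
  have hint2 : Integrable (fun ω => (ξ ω / q - 1) • v) μ := hintc.smul_const v
  -- unbiasedness
  have hunbiased : (∫ ω, ghat x ω ∂μ) = g := by
    have heq : ∀ ω, ghat x ω = g + (ξ ω / q - 1) • v := by
      intro ω
      have := hrepr ω
      rw [sub_eq_iff_eq_add] at this
      rw [this]; abel
    calc (∫ ω, ghat x ω ∂μ) = ∫ ω, (g + (ξ ω / q - 1) • v) ∂μ :=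
          integral_congr_ae (ae_of_all _ heq)
      _ = (∫ _ω, g ∂μ) + ∫ ω, (ξ ω / q - 1) • v ∂μ := integral_add (integrable_const g) hint2
      _ = g + (∫ ω, (ξ ω / q - 1) ∂μ) • v := by
          rw [integral_const, integral_smul_const]
          simp
      _ = g := by
          rw [integral_sub (hintξ.div_const q) (integrable_const 1), integral_div, hEξ,
            integral_const]
          simp [div_self hq0.ne']
  refine ⟨?_, hunbiased, ?_⟩
  · intro ω i i' hi hi'
    have h1 : v i ≠ 0 ∧ v i' ≠ 0 := by
      constructor
      · intro h
        apply hi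
        rw [hrepr ω]
        show (ξ ω / q - 1) * v i = 0
        rw [h]; ring
      · intro h
        apply hi'
        rw [hrepr ω]
        show (ξ ω / q - 1) * v i' = 0
        rw [h]; ring
    exact Fin.ext ((hv_unique i h1.1).trans (hv_unique i' h1.2).symm)
  -- moment bound
  · set s := {ω | ξ ω = 1} with hsdef
    set A := ((1 - q) / q) ^ p with hAdef
    have hA0 : 0 ≤ A := Real.rpow_nonneg (div_nonneg (by linarith) hq0.le) p
    have hpoint : ∀ ω, ‖ghat x ω - g‖ ^ p
        = (Set.indicator s (fun _ => A) ω + Set.indicator sᶜ (fun _ => (1:ℝ)) ω) * ‖v‖ ^ p := by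
      intro ω
      rw [hrepr ω, norm_smul, Real.norm_eq_abs,
        Real.mul_rpow (abs_nonneg _) (norm_nonneg _)]
      rcases hval ω with h | h
      · have hωs : ω ∉ s := by simp [hsdef, h]
        have : |ξ ω / q - 1| = 1 := by rw [h]; simp
        rw [this, Real.one_rpow, Set.indicator_of_notMem hωs,
          Set.indicator_of_mem (Set.mem_compl hωs)]
        ring
      · have hωs : ω ∈ s := h
        have : |ξ ω / q - 1| = (1 - q) / q := by
          rw [h]
          rw [abs_of_nonneg]
          · field_simp
          · rw [sub_nonneg]
            exact one_le_one_div hq0 hq1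
        rw [this, ← hAdef, Set.indicator_of_mem hωs,
          Set.indicator_of_notMem (by simp [hωs] : ω ∉ sᶜ)]
        ring
    have hint3 : Integrable (fun ω => Set.indicator s (fun _ => A) ω) μ :=
      (integrable_const A).indicator hs
    have hint4 : Integrable (fun ω => Set.indicator sᶜ (fun _ => (1:ℝ)) ω) μ :=
      (integrable_const 1).indicator hs.compl
    have hμsc : (μ sᶜ).toReal = 1 - q := by
      rw [measure_compl hs (measure_ne_top μ s), hq, measure_univ]
      rw [← ENNReal.ofReal_one, ← ENNReal.ofReal_sub _ hq0.le,
        ENNReal.toReal_ofReal (by linarith)]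
    have hEind : ∫ ω, (Set.indicator s (fun _ => A) ω + Set.indicator sᶜ (fun _ => (1:ℝ)) ω) ∂μ
        = q * A + (1 - q) := by
      rw [integral_add hint3 hint4, integral_indicator_const _ hs,
        integral_indicator_const _ hs.compl, measureReal_def, measureReal_def, hq, ENNReal.toReal_ofReal hq0.le, hμsc]
      simp
    have hEcalc : ∫ ω, ‖ghat x ω - g‖ ^ p ∂μ = (q * A + (1 - q)) * ‖v‖ ^ p := by
      calc ∫ ω, ‖ghat x ω - g‖ ^ p ∂μ
          = ∫ ω, (Set.indicator s (fun _ => A) ω + Set.indicator sᶜ (fun _ => (1:ℝ)) ω)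
              * ‖v‖ ^ p ∂μ := integral_congr_ae (ae_of_all _ hpoint)
        _ = (q * A + (1 - q)) * ‖v‖ ^ p := by rw [integral_mul_const, hEind]
    rw [hEcalc]
    -- the arithmetic bound
    have hqp : (0:ℝ) < q ^ (p - 1) := Real.rpow_pos_of_pos hq0 _
    have hqp1 : q ^ (p - 1) ≤ 1 := Real.rpow_le_one hq0.le hq1 (by linarith)
    have h1le : (1:ℝ) ≤ 1 / q ^ (p - 1) := (one_le_one_div hqp hqp1)
    have hterm1 : q * A ≤ 1 / q ^ (p - 1) := by
      have hdiv : A = (1 - q) ^ p / q ^ p := Real.div_rpow (by linarith) hq0.le p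
      have hnum : (1 - q) ^ p ≤ 1 := Real.rpow_le_one (by linarith) (by linarith) (by linarith)
      have hqp' : q ^ p = q ^ (p - 1) * q := by
        calc q ^ p = q ^ ((p - 1) + 1) := by ring_nf
          _ = q ^ (p - 1) * q ^ (1:ℝ) := Real.rpow_add hq0 _ _
          _ = q ^ (p - 1) * q := by rw [Real.rpow_one]
      have key : q * A = (1 - q) ^ p / q ^ (p - 1) := by
        rw [hdiv, hqp']
        field_simp
      rw [key]
      gcongr
    have hcoef : q * A + (1 - q) ≤ 2 / q ^ (p - 1) := by
      have h2 : (1:ℝ) - q ≤ 1 / q ^ (p - 1) := by linarith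
      calc q * A + (1 - q) ≤ 1 / q ^ (p - 1) + 1 / q ^ (p - 1) := add_le_add hterm1 h2
        _ = 2 / q ^ (p - 1) := by ring
    have hvM : ‖v‖ ^ p ≤ M ^ p := Real.rpow_le_rpow (norm_nonneg _) hnormv (by linarith)
    have hcoef0 : 0 ≤ q * A + (1 - q) := add_nonneg (mul_nonneg hq0.le hA0) (by linarith)
    calc (q * A + (1 - q)) * ‖v‖ ^ p ≤ (2 / q ^ (p - 1)) * M ^ p := by
          apply mul_le_mul hcoef hvM (Real.rpow_nonneg (norm_nonneg v) p)
            (div_nonneg (by norm_num) hqp.le)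
      _ = 2 * M ^ p / q ^ (p - 1) := by ring
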